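/- Let n ≥ 1, J = fromBlocks I_n 0 0 (−I_n) ∈ M_{2n}(ℂ). Suppose z₁, w₁, z₂, w₂ are n×n unitary matrices with det(z₁ − w₁) ≠ 0 and det(z₂ − w₂) ≠ 0. Then there exist n×n complex matrices a, b, c, d such that the block matrix g = fromBlocks a b c d satisfies g* J g = J, the matrices c z₁ + d and c w₁ + d are invertible, and (a z₁ + b)(c z₁ + d)⁻¹ = z₂ and (a w₁ + b)(c w₁ + d)⁻¹ = w₂. -/

import Mathlib

open Matrix

private lemma aux {n : ℕ} (z w : Matrix (Fin n) (Fin n) ℂ)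
    (hz : zᴴ * z = 1) (hw : wᴴ * w = 1) (hdet : (z - w).det ≠ 0) :
    ∃ a b c d t u : Matrix (Fin n) (Fin n) ℂ,
      aᴴ*a - cᴴ*c = 1 ∧ aᴴ*b - cᴴ*d = 0 ∧ bᴴ*a - dᴴ*c = 0 ∧ bᴴ*b - dᴴ*d = -1 ∧
      c + d = 1 ∧ a + b = z ∧ d - c = t ∧ b - a = w * t ∧ IsUnit t.det ∧
      aᴴ*z - cᴴ = 1 ∧ dᴴ - bᴴ*z = 1 ∧
      aᴴ*w - cᴴ = -u ∧ dᴴ - bᴴ*w = u ∧ IsUnit u.det := by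
  set u₀ : Matrix (Fin n) (Fin n) ℂ := 1 - zᴴ * w with hu₀def
  have hu₀ : u₀ = zᴴ * (z - w) := by rw [hu₀def, Matrix.mul_sub, hz]
  have hdz : IsUnit z.det := by
    have h : zᴴ.det * z.det = 1 := by rw [← Matrix.det_mul, hz, Matrix.det_one]
    rw [mul_comm] at h
    exact IsUnit.of_mul_eq_one _ h
  have hdu : IsUnit u₀.det := by
    rw [hu₀, Matrix.det_mul]
    refine IsUnit.mul_iff.mpr ⟨?_, isUnit_iff_ne_zero.mpr hdet⟩
    rw [Matrix.det_conjTranspose]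
    exact hdz.star
  have hinv : u₀ * u₀⁻¹ = 1 := Matrix.mul_nonsing_inv _ hdu
  have hinv' : u₀⁻¹ * u₀ = 1 := Matrix.nonsing_inv_mul _ hdu
  set t : Matrix (Fin n) (Fin n) ℂ := (2:ℂ) • u₀⁻¹ with htdef
  have hut : u₀ * t = (2:ℂ) • 1 := by rw [htdef, Matrix.mul_smul, hinv]
  have htu : t * u₀ = (2:ℂ) • 1 := by rw [htdef, Matrix.smul_mul, hinv']
  have htH : tᴴ = (2:ℂ) • (u₀ᴴ)⁻¹ := by
    rw [htdef, Matrix.conjTranspose_smul, Matrix.conjTranspose_nonsing_inv]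
    norm_num
  have hu₀H : u₀ᴴ = 1 - wᴴ * z := by
    rw [hu₀def]; simp [Matrix.conjTranspose_sub, Matrix.conjTranspose_mul]
  have hduH : IsUnit (u₀ᴴ).det := by rw [Matrix.det_conjTranspose]; exact hdu.star
  have htuH : tᴴ * u₀ᴴ = (2:ℂ) • 1 := by
    rw [htH, Matrix.smul_mul, Matrix.nonsing_inv_mul _ hduH]
  -- substitution facts
  have P1 : zᴴ * (w * t) = t - (2:ℂ) • 1 := by
    have h := hut
    rw [hu₀def, Matrix.sub_mul, Matrix.one_mul, Matrix.mul_assoc] at h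
    rw [← h]; abel
  have P2 : tᴴ * wᴴ * z = tᴴ - (2:ℂ) • 1 := by
    have h := htuH
    rw [hu₀H, Matrix.mul_sub, Matrix.mul_one, ← Matrix.mul_assoc] at h
    rw [← h]; abel
  have P3 : tᴴ * wᴴ * (w * t) = tᴴ * t := by
    rw [Matrix.mul_assoc, ← Matrix.mul_assoc wᴴ, hw, Matrix.one_mul]
  have hdt : IsUnit t.det := by
    have h2 : ((2:ℂ)•(1 : Matrix (Fin n) (Fin n) ℂ)).det = 2 ^ Fintype.card (Fin n) := by
      rw [Matrix.det_smul, Matrix.det_one, mul_one]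
    have h : t.det * u₀.det = 2 ^ Fintype.card (Fin n) := by
      rw [← Matrix.det_mul, htu, h2]
    have hne : t.det * u₀.det ≠ 0 := by rw [h]; exact pow_ne_zero _ two_ne_zero
    exact isUnit_iff_ne_zero.mpr (left_ne_zero_of_mul hne)
  -- the matrices
  refine ⟨(2:ℂ)⁻¹ • (z - w*t), (2:ℂ)⁻¹ • (z + w*t), (2:ℂ)⁻¹ • (1 - t), (2:ℂ)⁻¹ • (1 + t),
    t, (2:ℂ)⁻¹ • u₀, ?_, ?_, ?_, ?_, ?_, ?_, ?_, ?_, hdt, ?_, ?_, ?_, ?_, ?_⟩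
  · -- F1
    simp only [Matrix.conjTranspose_smul, Matrix.smul_mul, Matrix.mul_smul,
      Matrix.conjTranspose_sub, Matrix.conjTranspose_mul, Matrix.conjTranspose_one,
      Matrix.sub_mul, Matrix.mul_sub, Matrix.one_mul, Matrix.mul_one, hz, P1, P2, P3,
      Complex.star_def, map_inv₀, Complex.conj_ofNat]
    module
  · -- F2
    simp only [Matrix.conjTranspose_smul, Matrix.smul_mul, Matrix.mul_smul,
      Matrix.conjTranspose_sub, Matrix.conjTranspose_add, Matrix.conjTranspose_mul,
      Matrix.conjTranspose_one, Matrix.sub_mul, Matrix.mul_sub, Matrix.add_mul,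
      Matrix.mul_add, Matrix.one_mul, Matrix.mul_one, hz, P1, P2, P3,
      Complex.star_def, map_inv₀, Complex.conj_ofNat]
    module
  · -- F3
    simp only [Matrix.conjTranspose_smul, Matrix.smul_mul, Matrix.mul_smul,
      Matrix.conjTranspose_sub, Matrix.conjTranspose_add, Matrix.conjTranspose_mul,
      Matrix.conjTranspose_one, Matrix.sub_mul, Matrix.mul_sub, Matrix.add_mul,
      Matrix.mul_add, Matrix.one_mul, Matrix.mul_one, hz, P1, P2, P3,
      Complex.star_def, map_inv₀, Complex.conj_ofNat]
    module
  · -- F4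
    simp only [Matrix.conjTranspose_smul, Matrix.smul_mul, Matrix.mul_smul,
      Matrix.conjTranspose_sub, Matrix.conjTranspose_add, Matrix.conjTranspose_mul,
      Matrix.conjTranspose_one, Matrix.sub_mul, Matrix.mul_sub, Matrix.add_mul,
      Matrix.mul_add, Matrix.one_mul, Matrix.mul_one, hz, P1, P2, P3,
      Complex.star_def, map_inv₀, Complex.conj_ofNat]
    module
  · module
  · module
  · module
  · module
  · -- F8 : aᴴz - cᴴ = 1
    simp only [Matrix.conjTranspose_smul, Matrix.smul_mul,
      Matrix.conjTranspose_sub, Matrix.conjTranspose_mul, Matrix.conjTranspose_one,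
      Matrix.sub_mul, Matrix.one_mul, hz, P2,
      Complex.star_def, map_inv₀, Complex.conj_ofNat]
    module
  · -- F9 : dᴴ - bᴴz = 1
    simp only [Matrix.conjTranspose_smul, Matrix.smul_mul,
      Matrix.conjTranspose_add, Matrix.conjTranspose_mul, Matrix.conjTranspose_one,
      Matrix.add_mul, Matrix.one_mul, hz, P2,
      Complex.star_def, map_inv₀, Complex.conj_ofNat]
    module
  · -- F10 : aᴴw - cᴴ = -(2⁻¹ • u₀)
    have P4 : tᴴ * wᴴ * w = tᴴ := by rw [Matrix.mul_assoc, hw, Matrix.mul_one]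
    simp only [hu₀def, Matrix.conjTranspose_smul, Matrix.smul_mul,
      Matrix.conjTranspose_sub, Matrix.conjTranspose_mul, Matrix.conjTranspose_one,
      Matrix.sub_mul, Matrix.one_mul, P4,
      Complex.star_def, map_inv₀, Complex.conj_ofNat]
    module
  · -- F11 : dᴴ - bᴴw = 2⁻¹ • u₀
    have P4 : tᴴ * wᴴ * w = tᴴ := by rw [Matrix.mul_assoc, hw, Matrix.mul_one]
    simp only [hu₀def, Matrix.conjTranspose_smul, Matrix.smul_mul,
      Matrix.conjTranspose_add, Matrix.conjTranspose_mul, Matrix.conjTranspose_one,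
      Matrix.add_mul, Matrix.one_mul, P4,
      Complex.star_def, map_inv₀, Complex.conj_ofNat]
    module
  · -- IsUnit ((2⁻¹ • u₀).det)
    rw [Matrix.det_smul]
    exact (isUnit_iff_ne_zero.mpr (pow_ne_zero _ (by norm_num))).mul hdu

private lemma blockJ {n : ℕ} (a b c d : Matrix (Fin n) (Fin n) ℂ)
    (h1 : aᴴ*a - cᴴ*c = 1) (h2 : aᴴ*b - cᴴ*d = 0) (h3 : bᴴ*a - dᴴ*c = 0)
    (h4 : bᴴ*b - dᴴ*d = -1) :
    (Matrix.fromBlocks a b c d)ᴴ * Matrix.fromBlocks (1 : Matrix (Fin n) (Fin n) ℂ) 0 0 (-1)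
      * Matrix.fromBlocks a b c d
      = Matrix.fromBlocks (1 : Matrix (Fin n) (Fin n) ℂ) 0 0 (-1) := by
  have h1' : aᴴ*a + -(cᴴ*c) = 1 := by rw [← sub_eq_add_neg]; exact h1
  have h2' : aᴴ*b + -(cᴴ*d) = 0 := by rw [← sub_eq_add_neg]; exact h2
  have h3' : bᴴ*a + -(dᴴ*c) = 0 := by rw [← sub_eq_add_neg]; exact h3
  have h4' : bᴴ*b + -(dᴴ*d) = -1 := by rw [← sub_eq_add_neg]; exact h4
  rw [Matrix.fromBlocks_conjTranspose]
  simp only [Matrix.fromBlocks_multiply, Matrix.mul_one, Matrix.mul_zero, Matrix.zero_mul,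
    Matrix.one_mul, add_zero, zero_add, Matrix.mul_neg, Matrix.neg_mul]
  rw [h1', h2', h3', h4']


/-- 2-transitivity of the conformal group on transversal pairs of the Shilov boundary
`U(n)`: given unitary `z₁, w₁` and `z₂, w₂` with `det(z₁ − w₁) ≠ 0` and
`det(z₂ − w₂) ≠ 0`, there is a block matrix `g = [[a,b],[c,d]]` with `g* J g = J`
(`J = diag(I_n, −I_n)`) whose fractional action sends `z₁ ↦ z₂` and `w₁ ↦ w₂`. -/
theorem two_transitivity_on_transversal_pairs (n : ℕ) (hn : 1 ≤ n)
    (J : Matrix (Fin n ⊕ Fin n) (Fin n ⊕ Fin n) ℂ)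
    (hJ : J = Matrix.fromBlocks 1 0 0 (-1))
    (z₁ w₁ z₂ w₂ : Matrix (Fin n) (Fin n) ℂ)
    (hz₁ : z₁ ∈ Matrix.unitaryGroup (Fin n) ℂ) (hw₁ : w₁ ∈ Matrix.unitaryGroup (Fin n) ℂ)
    (hz₂ : z₂ ∈ Matrix.unitaryGroup (Fin n) ℂ) (hw₂ : w₂ ∈ Matrix.unitaryGroup (Fin n) ℂ)
    (h₁ : Matrix.det (z₁ - w₁) ≠ 0) (h₂ : Matrix.det (z₂ - w₂) ≠ 0) :
    ∃ a b c d : Matrix (Fin n) (Fin n) ℂ,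
      (Matrix.fromBlocks a b c d)ᴴ * J * Matrix.fromBlocks a b c d = J ∧
      IsUnit (c * z₁ + d) ∧ IsUnit (c * w₁ + d) ∧
      (a * z₁ + b) * (c * z₁ + d)⁻¹ = z₂ ∧
      (a * w₁ + b) * (c * w₁ + d)⁻¹ = w₂ := by
  have hz₁' : z₁ᴴ * z₁ = 1 := by
    rw [← Matrix.star_eq_conjTranspose]; exact Unitary.star_mul_self_of_mem hz₁
  have hw₁' : w₁ᴴ * w₁ = 1 := by
    rw [← Matrix.star_eq_conjTranspose]; exact Unitary.star_mul_self_of_mem hw₁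
  have hz₂' : z₂ᴴ * z₂ = 1 := by
    rw [← Matrix.star_eq_conjTranspose]; exact Unitary.star_mul_self_of_mem hz₂
  have hw₂' : w₂ᴴ * w₂ = 1 := by
    rw [← Matrix.star_eq_conjTranspose]; exact Unitary.star_mul_self_of_mem hw₂
  obtain ⟨a₁, b₁, c₁, d₁, t₁, u₁, A1, A2, A3, A4, A5, A6, A7, A8, A9, A10, A11, A12, A13, A14⟩ :=
    aux z₁ w₁ hz₁' hw₁' h₁
  obtain ⟨a₂, b₂, c₂, d₂, t₂, u₂, B1, B2, B3, B4, B5, B6, B7, B8, B9, B10, B11, B12, B13, B14⟩ :=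
    aux z₂ w₂ hz₂' hw₂' h₂
  set g₁ : Matrix (Fin n ⊕ Fin n) (Fin n ⊕ Fin n) ℂ := Matrix.fromBlocks a₁ b₁ c₁ d₁ with hg₁def
  set g₂ : Matrix (Fin n ⊕ Fin n) (Fin n ⊕ Fin n) ℂ := Matrix.fromBlocks a₂ b₂ c₂ d₂ with hg₂def
  have hg₁ : g₁ᴴ * J * g₁ = J := by rw [hJ]; exact blockJ _ _ _ _ A1 A2 A3 A4
  have hg₂ : g₂ᴴ * J * g₂ = J := by rw [hJ]; exact blockJ _ _ _ _ B1 B2 B3 B4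
  have hJJ : J * J = 1 := by
    rw [hJ]
    simp only [Matrix.fromBlocks_multiply, Matrix.mul_one, Matrix.mul_zero, Matrix.zero_mul,
      Matrix.one_mul, add_zero, zero_add, Matrix.neg_mul, Matrix.mul_neg, neg_neg,
      Matrix.mul_zero, neg_zero]
    exact Matrix.fromBlocks_one
  have hJH : Jᴴ = J := by
    rw [hJ, Matrix.fromBlocks_conjTranspose]
    simp
  set G : Matrix (Fin n ⊕ Fin n) (Fin n ⊕ Fin n) ℂ := g₂ * (J * g₁ᴴ * J) with hGdef
  have key1 : J * g₁ᴴ * J * g₁ = 1 := by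
    rw [Matrix.mul_assoc J g₁ᴴ J, Matrix.mul_assoc J (g₁ᴴ * J) g₁, hg₁, hJJ]
  have key2 : g₁ * (J * g₁ᴴ * J) = 1 := mul_eq_one_comm.mp key1
  have key3 : g₁ * J * g₁ᴴ = J := by
    have h : g₁ * J * g₁ᴴ * J = 1 := by
      rw [Matrix.mul_assoc (g₁ * J) g₁ᴴ J, Matrix.mul_assoc g₁ J (g₁ᴴ * J),
        ← Matrix.mul_assoc J g₁ᴴ J]
      exact key2
    calc g₁ * J * g₁ᴴ = g₁ * J * g₁ᴴ * (J * J) := by rw [hJJ, Matrix.mul_one]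
      _ = g₁ * J * g₁ᴴ * J * J := by simp only [Matrix.mul_assoc]
      _ = J := by rw [h, Matrix.one_mul]
  have hGH : Gᴴ = J * g₁ * J * g₂ᴴ := by
    rw [hGdef]
    simp only [Matrix.conjTranspose_mul, hJH, Matrix.conjTranspose_conjTranspose,
      Matrix.mul_assoc]
  have hGJ : Gᴴ * J * G = J := by
    calc Gᴴ * J * G = J * g₁ * J * (g₂ᴴ * J * g₂) * (J * g₁ᴴ * J) := by
          rw [hGH, hGdef]; simp only [Matrix.mul_assoc]
      _ = J * g₁ * J * J * (J * g₁ᴴ * J) := by rw [hg₂]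
      _ = J * g₁ * (J * J) * (J * g₁ᴴ) * J := by simp only [Matrix.mul_assoc]
      _ = J * g₁ * (J * g₁ᴴ) * J := by rw [hJJ, Matrix.mul_one]
      _ = J * (g₁ * J * g₁ᴴ) * J := by simp only [Matrix.mul_assoc]
      _ = J * J * J := by rw [key3]
      _ = J := by rw [hJJ, Matrix.one_mul]
  have hGblocks : G = Matrix.fromBlocks (a₂*a₁ᴴ - b₂*b₁ᴴ) (b₂*d₁ᴴ - a₂*c₁ᴴ)
      (c₂*a₁ᴴ - d₂*b₁ᴴ) (d₂*d₁ᴴ - c₂*c₁ᴴ) := by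
    rw [hGdef, hJ, hg₁def, hg₂def, Matrix.fromBlocks_conjTranspose]
    simp only [Matrix.fromBlocks_multiply, Matrix.mul_one, Matrix.mul_zero, Matrix.zero_mul,
      Matrix.one_mul, add_zero, zero_add, Matrix.neg_mul, Matrix.mul_neg, neg_zero, neg_neg]
    congr 1 <;> abel
  refine ⟨a₂*a₁ᴴ - b₂*b₁ᴴ, b₂*d₁ᴴ - a₂*c₁ᴴ, c₂*a₁ᴴ - d₂*b₁ᴴ, d₂*d₁ᴴ - c₂*c₁ᴴ, ?_, ?_, ?_, ?_, ?_⟩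
  · rw [← hGblocks]; exact hGJ
  · have h : (c₂*a₁ᴴ - d₂*b₁ᴴ) * z₁ + (d₂*d₁ᴴ - c₂*c₁ᴴ)
        = c₂ * (a₁ᴴ * z₁ - c₁ᴴ) + d₂ * (d₁ᴴ - b₁ᴴ * z₁) := by noncomm_ring
    rw [h, A10, A11, Matrix.mul_one, Matrix.mul_one, B5]
    exact isUnit_one
  · have h : (c₂*a₁ᴴ - d₂*b₁ᴴ) * w₁ + (d₂*d₁ᴴ - c₂*c₁ᴴ)
        = c₂ * (a₁ᴴ * w₁ - c₁ᴴ) + d₂ * (d₁ᴴ - b₁ᴴ * w₁) := by noncomm_ring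
    have h2 : c₂ * -u₁ + d₂ * u₁ = t₂ * u₁ := by
      rw [← B7, Matrix.sub_mul, Matrix.mul_neg]; abel
    rw [h, A12, A13, h2]
    exact (Matrix.isUnit_iff_isUnit_det _).mpr (by rw [Matrix.det_mul]; exact B9.mul A14)
  · have hd : (c₂*a₁ᴴ - d₂*b₁ᴴ) * z₁ + (d₂*d₁ᴴ - c₂*c₁ᴴ) = 1 := by
      have h : (c₂*a₁ᴴ - d₂*b₁ᴴ) * z₁ + (d₂*d₁ᴴ - c₂*c₁ᴴ)
          = c₂ * (a₁ᴴ * z₁ - c₁ᴴ) + d₂ * (d₁ᴴ - b₁ᴴ * z₁) := by noncomm_ring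
      rw [h, A10, A11, Matrix.mul_one, Matrix.mul_one, B5]
    have hnum : (a₂*a₁ᴴ - b₂*b₁ᴴ) * z₁ + (b₂*d₁ᴴ - a₂*c₁ᴴ) = z₂ := by
      have h : (a₂*a₁ᴴ - b₂*b₁ᴴ) * z₁ + (b₂*d₁ᴴ - a₂*c₁ᴴ)
          = a₂ * (a₁ᴴ * z₁ - c₁ᴴ) + b₂ * (d₁ᴴ - b₁ᴴ * z₁) := by noncomm_ring
      rw [h, A10, A11, Matrix.mul_one, Matrix.mul_one, B6]
    rw [hnum, hd, inv_one, Matrix.mul_one]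
  · have hd : (c₂*a₁ᴴ - d₂*b₁ᴴ) * w₁ + (d₂*d₁ᴴ - c₂*c₁ᴴ) = t₂ * u₁ := by
      have h : (c₂*a₁ᴴ - d₂*b₁ᴴ) * w₁ + (d₂*d₁ᴴ - c₂*c₁ᴴ)
          = c₂ * (a₁ᴴ * w₁ - c₁ᴴ) + d₂ * (d₁ᴴ - b₁ᴴ * w₁) := by noncomm_ring
      have h2 : c₂ * -u₁ + d₂ * u₁ = t₂ * u₁ := by
        rw [← B7, Matrix.sub_mul, Matrix.mul_neg]; abel
      rw [h, A12, A13, h2]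
    have hnum : (a₂*a₁ᴴ - b₂*b₁ᴴ) * w₁ + (b₂*d₁ᴴ - a₂*c₁ᴴ) = w₂ * (t₂ * u₁) := by
      have h : (a₂*a₁ᴴ - b₂*b₁ᴴ) * w₁ + (b₂*d₁ᴴ - a₂*c₁ᴴ)
          = a₂ * (a₁ᴴ * w₁ - c₁ᴴ) + b₂ * (d₁ᴴ - b₁ᴴ * w₁) := by noncomm_ring
      have h2 : a₂ * -u₁ + b₂ * u₁ = w₂ * (t₂ * u₁) := by
        rw [← Matrix.mul_assoc, ← B8, Matrix.sub_mul, Matrix.mul_neg]; abel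
      rw [h, A12, A13, h2]
    have hdet2 : IsUnit (t₂ * u₁).det := by rw [Matrix.det_mul]; exact B9.mul A14
    rw [hnum, hd, Matrix.mul_assoc, Matrix.mul_nonsing_inv _ hdet2, Matrix.mul_one]
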